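/- Let (E_n) be a sequence of nonnegative reals and (ĉ_n), (a_n) sequences with 0 < ĉ_n < 1 and a_n ≥ 0, satisfying E_{n+1} ≤ e^{2a_n}(ĉ_n + a_n)·E_n for all n. If ∑ a_n < ∞ and ∑ ln ĉ_n = −∞, then E_n → 0. -/

import Mathlib

open Filter Real

private lemma ptwise {c a : ℝ} (hc0 : 0 < c) (hc1 : c < 1) (ha : 0 ≤ a) :
    Real.log (c + a) ≤ 8 * a + (1/2) * max (Real.log c) (-Real.log 2) := by
  have hca : 0 < c + a := by linarith
  have hlog2 : Real.log 2 ≤ 1 := by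
    have := Real.log_le_sub_one_of_pos (by norm_num : (0:ℝ) < 2); linarith
  rcases le_or_gt (1/2 : ℝ) c with h | h
  · have hmax : max (Real.log c) (-Real.log 2) = Real.log c := by
      apply max_eq_left
      have h2 : -Real.log 2 = Real.log (1/2) := by
        rw [one_div, Real.log_inv]
      rw [h2]
      exact Real.log_le_log (by norm_num) h
    rw [hmax]
    have key : Real.log ((c+a)/c) ≤ (c+a)/c - 1 :=
      Real.log_le_sub_one_of_pos (by positivity)
    have hdiv : Real.log ((c+a)/c) = Real.log (c+a) - Real.log c :=
      Real.log_div (ne_of_gt hca) (ne_of_gt hc0)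
    have hfrac : (c+a)/c - 1 = a / c := by field_simp; ring
    have hac : a / c ≤ 2 * a := by
      rw [div_le_iff₀ hc0]
      nlinarith [mul_nonneg ha (by linarith : (0:ℝ) ≤ 2*c - 1)]
    have hlc : Real.log c ≤ 0 := Real.log_nonpos hc0.le hc1.le
    linarith [hdiv ▸ key]
  · have hmax : max (Real.log c) (-Real.log 2) = -Real.log 2 := by
      apply max_eq_right
      have h2 : -Real.log 2 = Real.log (1/2) := by
        rw [one_div, Real.log_inv]
      rw [h2]
      exact Real.log_le_log (hc0) h.le
    rw [hmax]
    have h1 : Real.log (c + a) ≤ (c + a) - 1 := Real.log_le_sub_one_of_pos hca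
    linarith

private lemma seg_aux {x : ℕ → ℝ} (hx : ∀ n, x n ≤ 0) {c : ℝ} (hc : 0 < c)
    {N N' : ℕ} (hNN : N ≤ N')
    (h : ∑ n ∈ Finset.range N', x n ≤ (∑ n ∈ Finset.range N, x n) - c) :
    ∑ n ∈ Finset.range N', max (x n) (-c) ≤ (∑ n ∈ Finset.range N, max (x n) (-c)) - c := by
  have hsplit : ∀ (y : ℕ → ℝ), ∑ n ∈ Finset.range N', y n
      = (∑ n ∈ Finset.range N, y n) + ∑ n ∈ Finset.Ico N N', y n := by
    intro y
    rw [Finset.range_eq_Ico, Finset.range_eq_Ico]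
    exact (Finset.sum_Ico_consecutive y (Nat.zero_le N) hNN).symm
  rw [hsplit] at h ⊢
  have hseg : ∑ n ∈ Finset.Ico N N', x n ≤ -c := by linarith
  have hgoal : ∑ n ∈ Finset.Ico N N', max (x n) (-c) ≤ -c := by
    by_cases hex : ∃ m ∈ Finset.Ico N N', x m ≤ -c
    · obtain ⟨m, hm, hxm⟩ := hex
      have hterm : ∀ n, max (x n) (-c) ≤ 0 := fun n => max_le (hx n) (by linarith)
      have heq : max (x m) (-c) = -c := max_eq_right hxm
      have := Finset.add_sum_erase (Finset.Ico N N') (fun n => max (x n) (-c)) hm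
      have hrest : ∑ n ∈ (Finset.Ico N N').erase m, max (x n) (-c) ≤ 0 :=
        Finset.sum_nonpos (fun n _ => hterm n)
      linarith
    · push_neg at hex
      have : ∑ n ∈ Finset.Ico N N', max (x n) (-c) = ∑ n ∈ Finset.Ico N N', x n :=
        Finset.sum_congr rfl (fun n hn => max_eq_left (hex n hn).le)
      linarith
  linarith

private lemma maxsum {x : ℕ → ℝ} (hx : ∀ n, x n ≤ 0) {c : ℝ} (hc : 0 < c)
    (h : Tendsto (fun N => ∑ n ∈ Finset.range N, x n) atTop atBot) :
    Tendsto (fun N => ∑ n ∈ Finset.range N, max (x n) (-c)) atTop atBot := by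
  set M : ℕ → ℝ := fun N => ∑ n ∈ Finset.range N, max (x n) (-c) with hM
  have hterm : ∀ n, max (x n) (-c) ≤ 0 := fun n => max_le (hx n) (by linarith)
  have hanti : Antitone M := antitone_nat_of_succ_le (fun n => by
    have : M (n+1) = M n + max (x n) (-c) := by
      simp [hM, Finset.sum_range_succ]
    linarith [hterm n])
  have key : ∀ k : ℕ, ∃ N, M N ≤ -(k * c) := by
    intro k
    induction k with
    | zero => exact ⟨0, by simp [hM]⟩
    | succ k ih =>
      obtain ⟨N, hN⟩ := ih
      obtain ⟨N', hN'1, hN'2⟩ :=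
        ((h.eventually (eventually_le_atBot ((∑ n ∈ Finset.range N, x n) - c))).and
          (eventually_ge_atTop N)).exists
      refine ⟨N', ?_⟩
      have := seg_aux hx hc hN'2 hN'1
      have : M N' ≤ M N - c := this
      push_cast
      linarith
  rw [tendsto_atBot]
  intro b
  obtain ⟨k, hk⟩ := exists_nat_ge (-b / c)
  have hkb : -(k * c) ≤ b := by
    rw [div_le_iff₀ hc] at hk
    linarith
  obtain ⟨N, hN⟩ := key k
  filter_upwards [eventually_ge_atTop N] with m hm
  exact (hanti hm).trans (hN.trans hkb)

theorem stmt_9 (E chat a : ℕ → ℝ)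
    (hE : ∀ n, 0 ≤ E n) (hchat : ∀ n, 0 < chat n ∧ chat n < 1) (ha : ∀ n, 0 ≤ a n)
    (hrec : ∀ n, E (n + 1) ≤ Real.exp (2 * a n) * (chat n + a n) * E n)
    (hsum : Summable a)
    (hdiv : Tendsto (fun N => ∑ n ∈ Finset.range N, Real.log (chat n)) atTop atBot) :
    Tendsto E atTop (nhds 0) := by
  set A := ∑' n, a n with hAdef
  have hA : ∀ N, ∑ n ∈ Finset.range N, a n ≤ A :=
    fun N => Summable.sum_le_tsum _ (fun i _ => ha i) hsum
  -- Step 1: E N ≤ E 0 * exp (∑ (2 a n + log (chat n + a n)))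
  have hEbound : ∀ N, E N ≤ E 0 *
      Real.exp (∑ n ∈ Finset.range N, (2 * a n + Real.log (chat n + a n))) := by
    intro N
    induction N with
    | zero => simp
    | succ N ih =>
      have hpos : 0 < chat N + a N := by
        have := (hchat N).1; linarith [ha N]
      have hfac : Real.exp (2 * a N) * (chat N + a N)
          = Real.exp (2 * a N + Real.log (chat N + a N)) := by
        rw [Real.exp_add, Real.exp_log hpos]
      calc E (N+1) ≤ Real.exp (2 * a N) * (chat N + a N) * E N := hrec N
        _ ≤ Real.exp (2 * a N) * (chat N + a N) *
            (E 0 * Real.exp (∑ n ∈ Finset.range N, (2 * a n + Real.log (chat n + a n)))) := by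
            apply mul_le_mul_of_nonneg_left ih (by positivity)
        _ = E 0 * Real.exp (∑ n ∈ Finset.range (N+1), (2 * a n + Real.log (chat n + a n))) := by
            rw [Finset.sum_range_succ, Real.exp_add, ← hfac]; ring
  -- Step 2: exponent bound
  set M : ℕ → ℝ := fun N => ∑ n ∈ Finset.range N, max (Real.log (chat n)) (-Real.log 2)
    with hMdef
  have hexp : ∀ N, ∑ n ∈ Finset.range N, (2 * a n + Real.log (chat n + a n))
      ≤ 10 * A + (1/2) * M N := by
    intro N
    have h1 : ∑ n ∈ Finset.range N, (2 * a n + Real.log (chat n + a n))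
        ≤ ∑ n ∈ Finset.range N,
          (10 * a n + (1/2) * max (Real.log (chat n)) (-Real.log 2)) := by
      apply Finset.sum_le_sum
      intro i _
      have := ptwise (hchat i).1 (hchat i).2 (ha i)
      linarith
    have h2 : ∑ n ∈ Finset.range N,
          (10 * a n + (1/2) * max (Real.log (chat n)) (-Real.log 2))
        = 10 * ∑ n ∈ Finset.range N, a n + (1/2) * M N := by
      rw [Finset.sum_add_distrib, ← Finset.mul_sum, ← Finset.mul_sum]
    have h3 := hA N
    calc ∑ n ∈ Finset.range N, (2 * a n + Real.log (chat n + a n))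
        ≤ 10 * ∑ n ∈ Finset.range N, a n + (1/2) * M N := by rw [← h2]; exact h1
      _ ≤ 10 * A + (1/2) * M N := by linarith
  -- Step 3: M → -∞
  have hlogc : ∀ n, Real.log (chat n) ≤ 0 :=
    fun n => Real.log_nonpos (hchat n).1.le (hchat n).2.le
  have hM : Tendsto M atTop atBot :=
    maxsum hlogc (Real.log_pos (by norm_num)) hdiv
  have hB : Tendsto (fun N => 10 * A + (1/2) * M N) atTop atBot := by
    have h1 : Tendsto (fun N => (1/2) * M N) atTop atBot :=
      hM.const_mul_atBot (by norm_num : (0:ℝ) < 1/2)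
    exact tendsto_atBot_add_const_left _ (10 * A) h1
  have hexp0 : Tendsto (fun N => E 0 * Real.exp (10 * A + (1/2) * M N)) atTop (nhds 0) := by
    have h1 : Tendsto (fun N => Real.exp (10 * A + (1/2) * M N)) atTop (nhds 0) :=
      Real.tendsto_exp_atBot.comp hB
    have := h1.const_mul (E 0)
    simpa using this
  apply squeeze_zero hE _ hexp0
  intro N
  exact (hEbound N).trans
    (mul_le_mul_of_nonneg_left (Real.exp_le_exp.2 (hexp N)) (hE 0))
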